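/- arXiv:2102.05307 — 2 statements merged into one kernel-verified Lean document; each statement's English description precedes it below -/
import Mathlib

section
/- Let n ∈ ℕ, α ∈ (0,1), and let γ₁, γ₂ be reals with 0 < γ₂ < γ₁. Set d = n^{1−γ₂}, ε = n^{−γ₁}, a = ⌊(1−α)n − d⌋, â = ⌊a − d⌋ and s = ⌊n(1−α)⌋, and assume 1 ≤ a ≤ n and 1 ≤ s ≤ n. Let (w_j)_{j=1}^n and (u_j)_{j=1}^n be families of nonnegative real numbers, each family having pairwise distinct values, and let L ⊆ {1,…,n} with #L < d. Assume: (i) |u_j − w_j| < ε/2 for every j ∉ L; and (ii) for every j, if r(w_j) ≤ a − d then w_{(a)} − w_j ≥ ε. Then {j : r(w_j) ≤ â} \ L ⊆ {j : u_j < u_{(s)}}. (This is the pathwise content of the global filtering inclusion (300217-1): on the event Ω_n, every index selected by the Brownian rank filter and containing no jump survives the global jump filter J_n(α).) -/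
open Finset

/-- The rank of `w k` among the family `(w k')_{k'}`:
the number of indices `k'` with `w k' ≤ w k`. -/
noncomputable def rank {n : ℕ} (w : Fin n → ℝ) (k : Fin n) : ℕ :=
  (Finset.univ.filter fun k' => w k' ≤ w k).card

/-- The `r`-th order statistic (the `r`-th smallest value) of the family `w`.
For a family with pairwise distinct values, this is the unique value of rank `r`. -/
noncomputable def orderStat {n : ℕ} (w : Fin n → ℝ) (r : ℕ) : ℝ :=
  if h : ∃ k, rank w k = r then w h.choose else 0

lemma rank_lt_rank {n : ℕ} {w : Fin n → ℝ} {j k : Fin n} (h : w j < w k) :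
    rank w j < rank w k := by
  apply Finset.card_lt_card
  rw [Finset.ssubset_def]
  constructor
  · intro x hx
    simp only [Finset.mem_filter, Finset.mem_univ, true_and] at *
    exact hx.trans h.le
  · intro hsub
    have hk : k ∈ Finset.univ.filter fun k' => w k' ≤ w k := by simp
    have := hsub hk
    simp only [Finset.mem_filter, Finset.mem_univ, true_and] at this
    linarith

lemma rank_injective {n : ℕ} {w : Fin n → ℝ} (hw : Function.Injective w) :
    Function.Injective (rank w) := by
  intro j k h
  by_contra hne
  rcases lt_trichotomy (w j) (w k) with h' | h' | h'
  · exact absurd h (rank_lt_rank h').ne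
  · exact hne (hw h')
  · exact absurd h.symm (rank_lt_rank h').ne

lemma rank_pos' {n : ℕ} (w : Fin n → ℝ) (k : Fin n) : 1 ≤ rank w k :=
  Finset.card_pos.mpr ⟨k, by simp⟩

lemma rank_le' {n : ℕ} (w : Fin n → ℝ) (k : Fin n) : rank w k ≤ n := by
  have := Finset.card_filter_le Finset.univ (fun k' => w k' ≤ w k)
  simpa [rank] using this

lemma exists_rank {n : ℕ} {w : Fin n → ℝ} (hw : Function.Injective w) {r : ℕ}
    (h1 : 1 ≤ r) (h2 : r ≤ n) : ∃ k, rank w k = r := by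
  have himg : Finset.univ.image (rank w) = Finset.Icc 1 n := by
    apply Finset.eq_of_subset_of_card_le
    · intro x hx
      simp only [Finset.mem_image] at hx
      obtain ⟨k, _, rfl⟩ := hx
      exact Finset.mem_Icc.mpr ⟨rank_pos' w k, rank_le' w k⟩
    · rw [Nat.card_Icc, Finset.card_image_of_injective _ (rank_injective hw),
        Finset.card_univ, Fintype.card_fin]
      omega
  have hr : r ∈ Finset.univ.image (rank w) := himg ▸ Finset.mem_Icc.mpr ⟨h1, h2⟩
  simpa using hr

lemma orderStat_spec {n : ℕ} {w : Fin n → ℝ} {r : ℕ} (h : ∃ k, rank w k = r) :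
    ∃ k, rank w k = r ∧ orderStat w r = w k :=
  ⟨h.choose, h.choose_spec, by rw [orderStat, dif_pos h]⟩

lemma card_rank_le' {n : ℕ} {w : Fin n → ℝ} (hw : Function.Injective w) (m : ℕ) :
    (Finset.univ.filter fun j => rank w j ≤ m).card ≤ m := by
  have h := Finset.card_le_card_of_injOn (t := Finset.Icc 1 m)
    (s := Finset.univ.filter fun j => rank w j ≤ m) (rank w)
    (fun j hj => by
      simp only [Finset.mem_coe, Finset.mem_filter] at hj
      exact Finset.mem_Icc.mpr ⟨rank_pos' w j, hj.2⟩)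
    ((rank_injective hw).injOn)
  simpa [Nat.card_Icc] using h

/-- Pathwise content of the global filtering inclusion (300217-1): every index selected
by the Brownian rank filter and containing no jump survives the global jump filter. -/
theorem stmt_7 (n : ℕ) (α γ₁ γ₂ : ℝ) (hα : α ∈ Set.Ioo (0 : ℝ) 1)
    (hγ₂ : 0 < γ₂) (hγ₁₂ : γ₂ < γ₁)
    (d ε : ℝ) (hd : d = (n : ℝ) ^ (1 - γ₂)) (hε : ε = (n : ℝ) ^ (-γ₁))
    (a : ℤ) (ha : a = ⌊(1 - α) * (n : ℝ) - d⌋)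
    (ahat : ℤ) (hahat : ahat = ⌊(a : ℝ) - d⌋)
    (s : ℤ) (hs : s = ⌊(n : ℝ) * (1 - α)⌋)
    (ha1 : 1 ≤ a) (han : a ≤ (n : ℤ)) (hs1 : 1 ≤ s) (hsn : s ≤ (n : ℤ))
    (w u : Fin n → ℝ) (hw0 : ∀ j, 0 ≤ w j) (hu0 : ∀ j, 0 ≤ u j)
    (hwinj : Function.Injective w) (huinj : Function.Injective u)
    (L : Finset (Fin n)) (hL : (L.card : ℝ) < d)
    (h1 : ∀ j ∉ L, |u j - w j| < ε / 2)
    (h2 : ∀ j, (rank w j : ℝ) ≤ (a : ℝ) - d → orderStat w a.toNat - w j ≥ ε) :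
    {j | (rank w j : ℝ) ≤ (ahat : ℝ)} \ (L : Set (Fin n))
      ⊆ {j | u j < orderStat u s.toNat} := by
  intro j hj
  obtain ⟨hj1, hjL⟩ := hj
  simp only [Set.mem_setOf_eq] at hj1 ⊢
  have hjL' : j ∉ L := hjL
  -- integer/real bookkeeping
  have ha_le : (a : ℝ) ≤ (1 - α) * n - d := ha ▸ Int.floor_le _
  have hs_gt : (n : ℝ) * (1 - α) - 1 < (s : ℝ) := hs ▸ Int.sub_one_lt_floor _
  have hahat_le : (ahat : ℝ) ≤ (a : ℝ) - d := hahat ▸ Int.floor_le _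
  set A := a.toNat with hA
  set S := s.toNat with hS
  have hA1 : 1 ≤ A := by omega
  have hAn : A ≤ n := by omega
  have hS1 : 1 ≤ S := by omega
  have hSn : S ≤ n := by omega
  have hA_eq : ((A : ℕ) : ℝ) = (a : ℝ) := by
    have : ((A : ℕ) : ℤ) = a := Int.toNat_of_nonneg (by omega)
    exact_mod_cast this
  have hS_eq : ((S : ℕ) : ℝ) = (s : ℝ) := by
    have : ((S : ℕ) : ℤ) = s := Int.toNat_of_nonneg (by omega)
    exact_mod_cast this
  obtain ⟨ka, hka_rank, hka_val⟩ := orderStat_spec (exists_rank hwinj hA1 hAn)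
  obtain ⟨ks, hks_rank, hks_val⟩ := orderStat_spec (exists_rank huinj hS1 hSn)
  -- the selected index is small
  have hj_rank : (rank w j : ℝ) ≤ (a : ℝ) - d := le_trans hj1 hahat_le
  have h2j : orderStat w A - w j ≥ ε := h2 j hj_rank
  rw [hka_val] at h2j
  have habsj := h1 j hjL'
  rw [abs_lt] at habsj
  have huj : u j < w ka - ε / 2 := by linarith [habsj.2]
  -- counting
  set T := Finset.univ.filter (fun j' => u j' ≤ w ka - ε / 2) with hT
  have hTsub : T ⊆ (Finset.univ.filter fun j' => rank w j' ≤ A - 1) ∪ L := by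
    intro x hx
    simp only [hT, Finset.mem_filter, Finset.mem_univ, true_and] at hx
    by_cases hxL : x ∈ L
    · exact Finset.mem_union_right _ hxL
    · refine Finset.mem_union_left _ (Finset.mem_filter.mpr ⟨Finset.mem_univ _, ?_⟩)
      by_contra hcon
      push_neg at hcon
      have hAx : A ≤ rank w x := by omega
      have hwx : w ka ≤ w x := by
        by_contra hlt
        push_neg at hlt
        have := rank_lt_rank hlt
        omega
      have habs := h1 x hxL
      rw [abs_lt] at habs
      linarith [habs.1]
  have hTcard : T.card ≤ (A - 1) + L.card := by
    calc T.card ≤ _ := Finset.card_le_card hTsub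
      _ ≤ _ + L.card := Finset.card_union_le _ _
      _ ≤ (A - 1) + L.card := by
          gcongr
          exact card_rank_le' hwinj _
  -- the s-th order statistic of u is large
  have hks_gt : w ka - ε / 2 < u ks := by
    by_contra hcon
    push_neg at hcon
    have hsub2 : Finset.univ.filter (fun j' => u j' ≤ u ks) ⊆ T := by
      intro x hx
      simp only [hT, Finset.mem_filter, Finset.mem_univ, true_and] at hx ⊢
      linarith
    have h5 : S ≤ T.card := by
      rw [← hks_rank]
      exact Finset.card_le_card hsub2
    have hSr : ((S : ℕ) : ℝ) ≤ ((A - 1 + L.card : ℕ) : ℝ) := by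
      exact_mod_cast h5.trans hTcard
    have hcast : ((A - 1 + L.card : ℕ) : ℝ) = ((A : ℕ) : ℝ) - 1 + L.card := by
      push_cast [Nat.cast_sub hA1]
      ring
    have hcomm : (1 - α) * (n : ℝ) = (n : ℝ) * (1 - α) := mul_comm _ _
    rw [hcast, hA_eq, hS_eq] at hSr
    linarith
  rw [hks_val]
  linarith
end

section
/- Let α ∈ (0,1) and γ₂ ∈ (0, 1/2). For each n ∈ ℕ, let (W_j)_{j=1}^n be random variables on a probability space (Ω, F, P) that are independent and each distributed according to the standard normal law N(0,1), and set a_n = ⌊(1−α)n − n^{1−γ₂}⌋ and â_n = ⌊a_n − n^{1−γ₂}⌋. Then there exists Č₀ > 0 such that for every constant Č ≥ Č₀ and every L > 0, P[ | |W|_{(â_n)} − c(α)^{1/2} | ≥ Č·n^{−γ₂} ] = O(n^{−L}) as n → ∞, where |W|_{(â_n)} is the â_n-th smallest of the values |W_1|, …, |W_n|. -/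
open MeasureTheory ProbabilityTheory Filter Finset
open scoped ENNReal

/-- Rank of `x k` within the family `(x k')_{k' ∈ s}`. -/
noncomputable def rankIn (s : Finset ℕ) (x : ℕ → ℝ) (k : ℕ) : ℕ :=
  (s.filter fun k' => x k' ≤ x k).card

/-- The `r`-th order statistic (the `r`-th smallest value) of the family `(x k)_{k ∈ s}`.
For a family with pairwise distinct values, this is the unique value of rank `r`. -/
noncomputable def orderStatIn (s : Finset ℕ) (x : ℕ → ℝ) (r : ℕ) : ℝ :=
  if h : ∃ k, k ∈ s ∧ rankIn s x k = r then x h.choose else 0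


open Real
open scoped NNReal


lemma mgf_le_of_bdd {Ω : Type*} [MeasurableSpace Ω] {P : Measure Ω} [IsProbabilityMeasure P]
    {X : Ω → ℝ} (hm : Measurable X) (hb : ∀ ω, |X ω| ≤ 1) (h0 : ∫ ω, X ω ∂P = 0) (t : ℝ) :
    mgf X P t ≤ exp (t ^ 2 / 2) := by
  have hXint : Integrable X P :=
    (integrable_const (1:ℝ)).mono' hm.aestronglyMeasurable (ae_of_all _ fun ω => by
      simpa using hb ω)
  have key : ∀ ω, exp (t * X ω) ≤ (1 + X ω) / 2 * exp t + (1 - X ω) / 2 * exp (-t) := by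
    intro ω
    have h1 : 0 ≤ (1 + X ω) / 2 := by have := abs_le.mp (hb ω); linarith [this.1]
    have h2 : 0 ≤ (1 - X ω) / 2 := by have := abs_le.mp (hb ω); linarith [this.2]
    have hsum : (1 + X ω) / 2 + (1 - X ω) / 2 = 1 := by ring
    have h := convexOn_exp.2 (Set.mem_univ t) (Set.mem_univ (-t)) h1 h2 hsum
    simp only [smul_eq_mul] at h
    have heq : (1 + X ω)/2 * t + (1 - X ω)/2 * (-t) = t * X ω := by ring
    rwa [heq] at h
  have hi1 : Integrable (fun ω => (1 + X ω) / 2 * exp t) P :=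
    (((integrable_const (1:ℝ)).add hXint).div_const 2).mul_const _
  have hi2 : Integrable (fun ω => (1 - X ω) / 2 * exp (-t)) P :=
    (((integrable_const (1:ℝ)).sub hXint).div_const 2).mul_const _
  have hmgf : mgf X P t ≤ ∫ ω, ((1 + X ω) / 2 * exp t + (1 - X ω) / 2 * exp (-t)) ∂P :=
    integral_mono_of_nonneg (ae_of_all _ fun ω => (exp_pos _).le) (hi1.add hi2)
      (ae_of_all _ key)
  calc mgf X P t ≤ _ := hmgf
    _ = cosh t := by
        rw [integral_add hi1 hi2, integral_mul_const, integral_mul_const,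
          integral_div, integral_div, integral_add (integrable_const _) hXint,
          integral_sub (integrable_const _) hXint, h0, integral_const]
        simp [Real.cosh_eq]
        ring
    _ ≤ exp (t ^ 2 / 2) := cosh_le_exp_half_sq t

-- Hoeffding-type bound: upper tail for sums of independent bounded centered rvs
lemma chernoff_sum {Ω : Type*} [MeasurableSpace Ω] {P : Measure Ω} [IsProbabilityMeasure P]
    {n : ℕ} (hn : 0 < n) (Y : Fin n → Ω → ℝ) (hm : ∀ j, Measurable (Y j))
    (hindep : iIndepFun Y P)
    (hb : ∀ j ω, |Y j ω| ≤ 1) (h0 : ∀ j, ∫ ω, Y j ω ∂P = 0)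
    {a : ℝ} (ha : 0 < a) :
    (P {ω | a ≤ ∑ j, Y j ω}).toReal ≤ exp (-(a ^ 2) / (2 * n)) := by
  set t : ℝ := a / n with ht_def
  have hn' : (0:ℝ) < n := Nat.cast_pos.mpr hn
  have ht : 0 ≤ t := le_of_lt (div_pos ha hn')
  have hint : ∀ j : Fin n, Integrable (fun ω => exp (t * Y j ω)) P := by
    intro j
    refine (integrable_const (exp |t|)).mono' (((hm j).const_mul t).exp).aestronglyMeasurable
      (ae_of_all _ fun ω => ?_)
    rw [Real.norm_eq_abs, abs_of_pos (exp_pos _), exp_le_exp]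
    calc t * Y j ω ≤ |t * Y j ω| := le_abs_self _
      _ = |t| * |Y j ω| := abs_mul _ _
      _ ≤ |t| * 1 := by gcongr; exact hb j ω
      _ = |t| := mul_one _
  have hSint : Integrable (fun ω => exp (t * (∑ j, Y j) ω)) P :=
    hindep.integrable_exp_mul_sum hm (fun j _ => hint j)
  have hchern := measure_ge_le_exp_mul_mgf (X := ∑ j, Y j) (μ := P) a ht hSint
  have hmgf : mgf (∑ j, Y j) P t ≤ exp (n * (t ^ 2 / 2)) := by
    rw [hindep.mgf_sum hm]
    calc (∏ j : Fin n, mgf (Y j) P t) ≤ ∏ j : Fin n, exp (t ^ 2 / 2) := by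
          apply Finset.prod_le_prod (fun j _ => mgf_nonneg)
            (fun j _ => mgf_le_of_bdd (hm j) (hb j) (h0 j) t)
      _ = exp (n * (t ^ 2 / 2)) := by
          rw [Finset.prod_const, ← Real.exp_nat_mul]
          simp
  have hset : {ω | a ≤ ∑ j, Y j ω} = {ω | a ≤ (∑ j, Y j) ω} := by
    ext ω; simp
  calc (P {ω | a ≤ ∑ j, Y j ω}).toReal
      ≤ exp (-t * a) * mgf (∑ j, Y j) P t := by simpa [hset, measureReal_def] using hchern
    _ ≤ exp (-t * a) * exp (n * (t ^ 2 / 2)) := by gcongr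
    _ = exp (-(a ^ 2) / (2 * n)) := by
        rw [← exp_add]
        congr 1
        rw [ht_def]
        field_simp
        ring



section OrderStat
variable {s : Finset ℕ} {x : ℕ → ℝ}

lemma rank_lt_rank_s12 (hk1 : k1 ∈ s) (hk2 : k2 ∈ s) (h : x k1 < x k2) :
    rankIn s x k1 < rankIn s x k2 := by
  apply Finset.card_lt_card
  constructor
  · intro k hk
    simp only [Finset.mem_filter] at hk ⊢
    exact ⟨hk.1, hk.2.trans h.le⟩
  · intro hsub
    have : k2 ∈ s.filter fun k' => x k' ≤ x k2 := by
      simp [Finset.mem_filter, hk2]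
    have := hsub this
    simp only [Finset.mem_filter] at this
    exact absurd this.2 (not_le.mpr h)

lemma rank_injOn (hinj : ∀ k1 ∈ s, ∀ k2 ∈ s, x k1 = x k2 → k1 = k2) :
    Set.InjOn (rankIn s x) s := by
  intro k1 hk1 k2 hk2 h
  rcases lt_trichotomy (x k1) (x k2) with hx | hx | hx
  · exact absurd h (rank_lt_rank_s12 hk1 hk2 hx).ne
  · exact hinj k1 hk1 k2 hk2 hx
  · exact absurd h.symm (rank_lt_rank_s12 hk2 hk1 hx).ne

lemma rank_mem_Icc (hk : k ∈ s) : rankIn s x k ∈ Finset.Icc 1 s.card := by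
  simp only [Finset.mem_Icc]
  constructor
  · rw [Nat.one_le_iff_ne_zero, ← Nat.pos_iff_ne_zero]
    apply Finset.card_pos.mpr
    exact ⟨k, by simp [Finset.mem_filter, hk]⟩
  · exact Finset.card_le_card (Finset.filter_subset _ _)

lemma exists_rank_s12 (hinj : ∀ k1 ∈ s, ∀ k2 ∈ s, x k1 = x k2 → k1 = k2)
    {r : ℕ} (hr : r ∈ Finset.Icc 1 s.card) : ∃ k, k ∈ s ∧ rankIn s x k = r := by
  have himg : s.image (rankIn s x) = Finset.Icc 1 s.card := by
    apply Finset.eq_of_subset_of_card_le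
    · intro r hr
      rcases Finset.mem_image.mp hr with ⟨k, hk, hkr⟩
      exact hkr ▸ rank_mem_Icc hk
    · rw [Finset.card_image_of_injOn (rank_injOn hinj), Nat.card_Icc]
      omega
  have : r ∈ s.image (rankIn s x) := himg ▸ hr
  rcases Finset.mem_image.mp this with ⟨k, hk, hkr⟩
  exact ⟨k, hk, hkr⟩

lemma orderStatIn_eq (hinj : ∀ k1 ∈ s, ∀ k2 ∈ s, x k1 = x k2 → k1 = k2)
    {r : ℕ} {k : ℕ} (hk : k ∈ s) (hkr : rankIn s x k = r) :
    orderStatIn s x r = x k := by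
  have h : ∃ k, k ∈ s ∧ rankIn s x k = r := ⟨k, hk, hkr⟩
  rw [orderStatIn, dif_pos h]
  obtain ⟨hk0, hk0r⟩ := h.choose_spec
  rcases lt_trichotomy (x h.choose) (x k) with hx | hx | hx
  · exact absurd (hk0r.trans hkr.symm) (rank_lt_rank_s12 hk0 hk hx).ne
  · exact hx
  · exact absurd (hkr.trans hk0r.symm) (rank_lt_rank_s12 hk hk0 hx).ne

lemma orderStatIn_le_iff (hinj : ∀ k1 ∈ s, ∀ k2 ∈ s, x k1 = x k2 → k1 = k2)
    {r : ℕ} (hr : r ∈ Finset.Icc 1 s.card) (t : ℝ) :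
    orderStatIn s x r ≤ t ↔ r ≤ (s.filter fun k => x k ≤ t).card := by
  obtain ⟨k0, hk0, hk0r⟩ := exists_rank_s12 hinj hr
  rw [orderStatIn_eq hinj hk0 hk0r]
  constructor
  · intro h
    rw [← hk0r]
    apply Finset.card_le_card
    intro k hk
    simp only [Finset.mem_filter] at hk ⊢
    exact ⟨hk.1, hk.2.trans h⟩
  · intro h
    by_contra hlt
    push_neg at hlt
    have hsub : (s.filter fun k => x k ≤ t) ⊆
        (s.filter fun k' => x k' ≤ x k0).erase k0 := by
      intro k hk
      simp only [Finset.mem_filter] at hk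
      rw [Finset.mem_erase]
      refine ⟨?_, by simp [Finset.mem_filter, hk.1, hk.2.trans hlt.le]⟩
      rintro rfl
      exact absurd hk.2 (not_le.mpr hlt)
    have hcard := Finset.card_le_card hsub
    rw [Finset.card_erase_of_mem (by simp [Finset.mem_filter, hk0])] at hcard
    have : rankIn s x k0 = r := hk0r
    rw [rankIn] at this
    have hr1 : 1 ≤ r := (Finset.mem_Icc.mp hr).1
    omega
  
end OrderStat
open scoped NNReal ENNReal

noncomputable def gcdf (t : ℝ) : ℝ := ((gaussianReal 0 1) {x : ℝ | |x| ≤ t}).toReal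

lemma habs_Icc (t : ℝ) : {x : ℝ | |x| ≤ t} = Set.Icc (-t) t := by
  ext x; simp [abs_le]

lemma gcdf_sqrt {c α : ℝ} (hc : 0 < c) (hα1 : α ≤ 1)
    (hcα : gaussianReal 0 1 {x : ℝ | x ^ 2 ≤ c} = ENNReal.ofReal (1 - α)) :
    gcdf (Real.sqrt c) = 1 - α := by
  have hset : {x : ℝ | |x| ≤ Real.sqrt c} = {x : ℝ | x ^ 2 ≤ c} := by
    ext x
    simp only [Set.mem_setOf_eq]
    rw [show |x| ≤ Real.sqrt c ↔ |x| ^ 2 ≤ c from Real.le_sqrt (abs_nonneg x) hc.le, sq_abs]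
  rw [gcdf, hset, hcα, ENNReal.toReal_ofReal (by linarith)]

lemma gpdf_ge {M x : ℝ} (hx0 : 0 ≤ x) (hxM : x ≤ M) :
    gaussianPDFReal 0 1 M ≤ gaussianPDFReal 0 1 x := by
  rw [gaussianPDFReal, gaussianPDFReal]
  apply mul_le_mul_of_nonneg_left _ (by positivity)
  rw [Real.exp_le_exp]
  have : x ^ 2 ≤ M ^ 2 := by nlinarith
  simp only [sub_zero, NNReal.coe_one, mul_one]
  gcongr


lemma gcdf_increment {u v M : ℝ} (hu : 0 ≤ u) (huv : u ≤ v) (hvM : v ≤ M) :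
    gcdf u + (v - u) * gaussianPDFReal 0 1 M ≤ gcdf v := by
  have h1 : (1 : ℝ≥0) ≠ 0 := one_ne_zero
  have hIoc : ENNReal.ofReal ((v - u) * gaussianPDFReal 0 1 M) ≤ (gaussianReal 0 1) (Set.Ioc u v) := by
    rw [show (gaussianReal 0 1) (Set.Ioc u v) = ENNReal.ofReal (∫ x in Set.Ioc u v, gaussianPDFReal 0 1 x) from
      gaussianReal_apply_eq_integral 0 h1 _]
    apply ENNReal.ofReal_le_ofReal
    have := setIntegral_ge_of_const_le (μ := volume) (c := gaussianPDFReal 0 1 M)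
      measurableSet_Ioc (by simp) (fun x hx => gpdf_ge (le_trans hu hx.1.le) (hx.2.trans hvM))
      ((integrable_gaussianPDFReal 0 1).integrableOn)
    rw [Real.volume_real_Ioc] at this
    rw [max_eq_left (by linarith), smul_eq_mul] at this
    linarith [this]
  have hdisj : Disjoint (Set.Icc (-u) u) (Set.Ioc u v) := by
    apply Set.disjoint_left.mpr
    intro x hx hx2
    exact absurd hx2.1 (not_lt.mpr hx.2)
  have hsub : Set.Icc (-u) u ∪ Set.Ioc u v ⊆ Set.Icc (-v) v := by
    intro x hx
    rcases hx with h | h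
    · exact ⟨le_trans (by linarith) h.1, h.2.trans huv⟩
    · exact ⟨le_trans (by linarith [le_trans hu h.1.le]) h.1.le, h.2⟩
  have hmeas : (gaussianReal 0 1) (Set.Icc (-u) u) + (gaussianReal 0 1) (Set.Ioc u v) ≤ (gaussianReal 0 1) (Set.Icc (-v) v) := by
    rw [← measure_union hdisj measurableSet_Ioc]
    exact measure_mono hsub
  have hfin : ∀ s : Set ℝ, (gaussianReal 0 1) s ≠ ⊤ := fun s => measure_ne_top _ _
  rw [gcdf, gcdf, habs_Icc, habs_Icc]
  have := ENNReal.toReal_mono (hfin _) hmeas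
  rw [ENNReal.toReal_add (hfin _) (hfin _)] at this
  have h2 : (v - u) * gaussianPDFReal 0 1 M ≤ ((gaussianReal 0 1) (Set.Ioc u v)).toReal := by
    have := ENNReal.toReal_mono (hfin _) hIoc
    rwa [ENNReal.toReal_ofReal
      (mul_nonneg (by linarith) (gaussianPDFReal_nonneg _ _ _))] at this
  linarith

lemma gcdf_nonneg (t : ℝ) : 0 ≤ gcdf t := ENNReal.toReal_nonneg

lemma gcdf_le_one (t : ℝ) : gcdf t ≤ 1 := by
  rw [gcdf]
  have : (gaussianReal 0 1) {x : ℝ | |x| ≤ t} ≤ 1 := prob_le_one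
  exact_mod_cast ENNReal.toReal_mono (by simp) this

lemma sum_Icc_one (f : ℕ → ℝ) (n : ℕ) : ∑ k ∈ Finset.Icc 1 n, f k = ∑ j : Fin n, f (j.1 + 1) := by
  rw [Fin.sum_univ_eq_sum_range (fun i => f (i + 1)) n]
  rw [show Finset.Icc 1 n = Finset.Ico 1 (n + 1) by rw [Finset.Ico_add_one_right_eq_Icc]]
  rw [Finset.sum_Ico_eq_sum_range]
  simp [add_comm]

section Tail
variable {Ω : Type*} [MeasurableSpace Ω] {P : Measure Ω} [IsProbabilityMeasure P]
  {n : ℕ} {V : ℕ → Ω → ℝ}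

/-- centered indicator of `|·| ≤ t` -/
noncomputable def cind (t p : ℝ) (x : ℝ) : ℝ := (if |x| ≤ t then (1:ℝ) else 0) - p

lemma cind_meas (t p : ℝ) : Measurable (cind t p) := by
  apply Measurable.sub _ measurable_const
  exact Measurable.ite (measurableSet_le (by fun_prop) measurable_const)
    measurable_const measurable_const

lemma cind_int (t : ℝ) : ∫ x, cind t (gcdf t) x ∂(gaussianReal 0 1) = 0 := by
  have hmeasS : MeasurableSet {x : ℝ | |x| ≤ t} :=
    measurableSet_le (by fun_prop) measurable_const
  have hind : ∀ x : ℝ, (if |x| ≤ t then (1:ℝ) else 0)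
      = Set.indicator {x : ℝ | |x| ≤ t} (fun _ => (1:ℝ)) x := by
    intro x; rw [Set.indicator_apply]; rfl
  have hmeas0 : Measurable (fun x : ℝ => if |x| ≤ t then (1:ℝ) else 0) :=
    Measurable.ite (measurableSet_le (by fun_prop) measurable_const)
      measurable_const measurable_const
  have hint1 : Integrable (fun x => if |x| ≤ t then (1:ℝ) else 0) (gaussianReal 0 1) :=
    (integrable_const (1:ℝ)).mono' hmeas0.aestronglyMeasurable
      (ae_of_all _ fun x => by split <;> simp)
  rw [show (fun x => cind t (gcdf t) x)
      = fun x => (if |x| ≤ t then (1:ℝ) else 0) - gcdf t from rfl]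
  rw [integral_sub hint1 (integrable_const _), integral_const]
  simp only [measure_univ, ENNReal.toReal_one, probReal_univ, one_smul, smul_eq_mul]
  have : ∫ x, (if |x| ≤ t then (1:ℝ) else 0) ∂(gaussianReal 0 1) = gcdf t := by
    rw [show (fun x => if |x| ≤ t then (1:ℝ) else 0)
        = fun x => Set.indicator {x : ℝ | |x| ≤ t} (fun _ => (1:ℝ)) x from funext hind]
    rw [integral_indicator_const (1:ℝ) hmeasS]
    simp [gcdf, measureReal_def]
  rw [this]; ring

lemma cind_bdd {t p : ℝ} (hp0 : 0 ≤ p) (hp1 : p ≤ 1) (x : ℝ) : |cind t p x| ≤ 1 := by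
  rw [cind, abs_le]; constructor <;> [skip; skip] <;> split <;> simp <;> linarith

/-- sum of indicators equals the filtered cardinality -/
lemma sum_cind_eq (hn : 0 < n) (t p : ℝ) (ω : Ω) :
    ∑ j : Fin n, cind t p (V (j.1 + 1) ω)
      = (((Finset.Icc 1 n).filter (fun k => |V k ω| ≤ t)).card : ℝ) - n * p := by
  have h1 : ∑ j : Fin n, cind t p (V (j.1 + 1) ω)
      = (∑ j : Fin n, (if |V (j.1+1) ω| ≤ t then (1:ℝ) else 0)) - n * p := by
    rw [show (fun j : Fin n => cind t p (V (j.1+1) ω))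
        = fun j : Fin n => (if |V (j.1+1) ω| ≤ t then (1:ℝ) else 0) - p from rfl,
      Finset.sum_sub_distrib, Finset.sum_const]
    simp [mul_comm]
  rw [h1]
  congr 1
  rw [← sum_Icc_one (fun k => if |V k ω| ≤ t then (1:ℝ) else 0) n]
  rw [Finset.card_filter]
  push_cast
  rfl

lemma tail_upper (hn : 0 < n) (hVmeas : ∀ j, Measurable (V j))
    (hVindep : iIndepFun
      (fun j : Fin n => V (j.1 + 1)) P)
    (hVlaw : ∀ j ∈ Finset.Icc 1 n, Measure.map (V j) P = gaussianReal 0 1)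
    {t r a : ℝ} (ha : 0 < a) (hr : (n : ℝ) * gcdf t + a ≤ r) :
    (P {ω | r ≤ (((Finset.Icc 1 n).filter (fun k => |V k ω| ≤ t)).card : ℝ)}).toReal
      ≤ Real.exp (-(a ^ 2) / (2 * n)) := by
  set p := gcdf t with hp
  set Y : Fin n → Ω → ℝ := fun j ω => cind t p (V (j.1 + 1) ω) with hY
  have hYm : ∀ j, Measurable (Y j) := fun j => (cind_meas t p).comp (hVmeas _)
  have hYindep : iIndepFun Y P :=
    hVindep.comp (fun _ => cind t p) (fun _ => cind_meas t p)
  have hYb : ∀ j ω, |Y j ω| ≤ 1 := fun j ω => cind_bdd (gcdf_nonneg t) (gcdf_le_one t) _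
  have hY0 : ∀ j : Fin n, ∫ ω, Y j ω ∂P = 0 := by
    intro j
    have hjmem : (j.1 + 1) ∈ Finset.Icc 1 n := by
      simp only [Finset.mem_Icc]; omega
    rw [hY]
    have : ∫ ω, cind t p (V (j.1+1) ω) ∂P = ∫ x, cind t p x ∂(Measure.map (V (j.1+1)) P) := by
      rw [integral_map (hVmeas _).aemeasurable (cind_meas t p).aestronglyMeasurable]
    rw [this, hVlaw _ hjmem, hp, cind_int]
  have hmono : {ω : Ω | r ≤ (((Finset.Icc 1 n).filter (fun k => |V k ω| ≤ t)).card : ℝ)}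
      ⊆ {ω | a ≤ ∑ j, Y j ω} := by
    intro ω hω
    simp only [Set.mem_setOf_eq] at hω ⊢
    rw [hY]
    rw [sum_cind_eq hn t p ω]
    linarith
  calc (P _).toReal ≤ (P {ω | a ≤ ∑ j, Y j ω}).toReal := by
        apply ENNReal.toReal_mono (measure_ne_top _ _) (measure_mono hmono)
    _ ≤ Real.exp (-(a ^ 2) / (2 * n)) := chernoff_sum hn Y hYm hYindep hYb hY0 ha

lemma tail_lower (hn : 0 < n) (hVmeas : ∀ j, Measurable (V j))
    (hVindep : iIndepFun
      (fun j : Fin n => V (j.1 + 1)) P)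
    (hVlaw : ∀ j ∈ Finset.Icc 1 n, Measure.map (V j) P = gaussianReal 0 1)
    {t b a : ℝ} (ha : 0 < a) (hb : b + a ≤ (n : ℝ) * gcdf t) :
    (P {ω | (((Finset.Icc 1 n).filter (fun k => |V k ω| ≤ t)).card : ℝ) ≤ b}).toReal
      ≤ Real.exp (-(a ^ 2) / (2 * n)) := by
  set p := gcdf t with hp
  set Y : Fin n → Ω → ℝ := fun j ω => -(cind t p (V (j.1 + 1) ω)) with hY
  have hYm : ∀ j, Measurable (Y j) := fun j => ((cind_meas t p).comp (hVmeas _)).neg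
  have hYindep : iIndepFun Y P :=
    hVindep.comp (fun _ x => -(cind t p x)) (fun _ => (cind_meas t p).neg)
  have hYb : ∀ j ω, |Y j ω| ≤ 1 := fun j ω => by
    rw [hY]; rw [abs_neg]; exact cind_bdd (gcdf_nonneg t) (gcdf_le_one t) _
  have hY0 : ∀ j : Fin n, ∫ ω, Y j ω ∂P = 0 := by
    intro j
    have hjmem : (j.1 + 1) ∈ Finset.Icc 1 n := by
      simp only [Finset.mem_Icc]; omega
    rw [hY]
    simp only
    rw [integral_neg]
    have : ∫ ω, cind t p (V (j.1+1) ω) ∂P = ∫ x, cind t p x ∂(Measure.map (V (j.1+1)) P) := by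
      rw [integral_map (hVmeas _).aemeasurable (cind_meas t p).aestronglyMeasurable]
    rw [this, hVlaw _ hjmem, hp, cind_int, neg_zero]
  have hmono : {ω : Ω | (((Finset.Icc 1 n).filter (fun k => |V k ω| ≤ t)).card : ℝ) ≤ b}
      ⊆ {ω | a ≤ ∑ j, Y j ω} := by
    intro ω hω
    simp only [Set.mem_setOf_eq] at hω ⊢
    rw [hY]
    have hsum : ∑ j : Fin n, -(cind t p (V (j.1+1) ω))
        = -((((Finset.Icc 1 n).filter (fun k => |V k ω| ≤ t)).card : ℝ) - n * p) := by
      rw [← sum_cind_eq hn t p ω, ← Finset.sum_neg_distrib]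
    rw [hsum]
    linarith
  calc (P _).toReal ≤ (P {ω | a ≤ ∑ j, Y j ω}).toReal := by
        apply ENNReal.toReal_mono (measure_ne_top _ _) (measure_mono hmono)
    _ ≤ Real.exp (-(a ^ 2) / (2 * n)) := chernoff_sum hn Y hYm hYindep hYb hY0 ha

end Tail

section Distinct
variable {Ω : Type*} [MeasurableSpace Ω] {P : Measure Ω} [IsProbabilityMeasure P]

lemma gauss_atom_null (a : ℝ) : (gaussianReal 0 1) {a} = 0 :=
  gaussianReal_absolutelyContinuous 0 one_ne_zero (volume_singleton)

lemma pair_abs_eq_null {X Y : Ω → ℝ} (hX : Measurable X) (hY : Measurable Y)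
    (hindep : IndepFun X Y P)
    (hXlaw : Measure.map X P = gaussianReal 0 1) (hYlaw : Measure.map Y P = gaussianReal 0 1) :
    P {ω | |X ω| = |Y ω|} = 0 := by
  set D : Set (ℝ × ℝ) := {p | |p.1| = |p.2|} with hD
  have hDmeas : MeasurableSet D := by
    have : D = (fun p : ℝ × ℝ => |p.1| - |p.2|) ⁻¹' {0} := by
      ext p; simp [hD, sub_eq_zero]
    rw [this]
    exact (by fun_prop : Measurable fun p : ℝ × ℝ => |p.1| - |p.2|) (measurableSet_singleton 0)
  have hpair : Measurable (fun ω => (X ω, Y ω)) := hX.prodMk hY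
  have hmap : Measure.map (fun ω => (X ω, Y ω)) P
      = (gaussianReal 0 1).prod (gaussianReal 0 1) := by
    rw [(indepFun_iff_map_prod_eq_prod_map_map hX.aemeasurable hY.aemeasurable).mp hindep,
      hXlaw, hYlaw]
  have : P {ω | |X ω| = |Y ω|} = Measure.map (fun ω => (X ω, Y ω)) P D := by
    rw [Measure.map_apply hpair hDmeas]
    rfl
  rw [this, hmap, Measure.prod_apply hDmeas]
  have hnull : ∀ x : ℝ, (gaussianReal 0 1) (Prod.mk x ⁻¹' D) = 0 := by
    intro x
    apply measure_mono_null (t := {x, -x})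
    · intro y hy
      simp only [hD, Set.mem_preimage, Set.mem_setOf_eq] at hy
      rcases abs_eq_abs.mp hy.symm with h | h
      · exact Or.inl h
      · exact Or.inr h
    · rw [Set.insert_eq]
      exact measure_union_null (gauss_atom_null x) (gauss_atom_null (-x))
  simp only [hnull]
  simp

lemma distinct_null {n : ℕ} {V : ℕ → Ω → ℝ} (hVmeas : ∀ j, Measurable (V j))
    (hVindep : iIndepFun
      (fun j : Fin n => V (j.1 + 1)) P)
    (hVlaw : ∀ j ∈ Finset.Icc 1 n, Measure.map (V j) P = gaussianReal 0 1) :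
    P {ω | ∃ i ∈ Finset.Icc 1 n, ∃ j ∈ Finset.Icc 1 n, i ≠ j ∧ |V i ω| = |V j ω|} = 0 := by
  have hpair : ∀ i ∈ Finset.Icc 1 n, ∀ j ∈ Finset.Icc 1 n, i ≠ j →
      P {ω | |V i ω| = |V j ω|} = 0 := by
    intro i hi j hj hij
    rw [Finset.mem_Icc] at hi hj
    have hi' : i - 1 < n := by omega
    have hj' : j - 1 < n := by omega
    have hne : (⟨i - 1, hi'⟩ : Fin n) ≠ ⟨j - 1, hj'⟩ := by
      simp only [ne_eq, Fin.mk.injEq]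
      omega
    have hind := hVindep.indepFun hne
    simp only at hind
    have heqi : i - 1 + 1 = i := by omega
    have heqj : j - 1 + 1 = j := by omega
    rw [heqi, heqj] at hind
    exact pair_abs_eq_null (hVmeas i) (hVmeas j) hind
      (hVlaw i (Finset.mem_Icc.mpr hi)) (hVlaw j (Finset.mem_Icc.mpr hj))
  apply measure_mono_null (t := ⋃ i ∈ (Finset.Icc 1 n : Finset ℕ), ⋃ j ∈ (Finset.Icc 1 n : Finset ℕ),
    {ω | i ≠ j ∧ |V i ω| = |V j ω|})
  · intro ω hω
    obtain ⟨i, hi, j, hj, hij, habs⟩ := hω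
    exact Set.mem_biUnion hi (Set.mem_biUnion hj ⟨hij, habs⟩)
  · apply (measure_biUnion_null_iff (Finset.Icc 1 n : Finset ℕ).countable_toSet).mpr
    intro i hi
    apply (measure_biUnion_null_iff (Finset.Icc 1 n : Finset ℕ).countable_toSet).mpr
    intro j hj
    by_cases hij : i = j
    · subst hij
      convert measure_empty
      · ext ω; simp
      · infer_instance
    · apply measure_mono_null (t := {ω | |V i ω| = |V j ω|})
      · intro ω hω; exact hω.2
      · exact hpair i hi j hj hij

end Distinct

-- final asymptotic helper
lemma exp_le_rpow_event {β L : ℝ} (hβ : 0 < β) (hL : 0 < L) :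
    ∀ᶠ x : ℝ in atTop, Real.exp (-(x ^ β) / 2) ≤ x ^ (-L) := by
  have h := (isLittleO_log_rpow_atTop hβ).def (by positivity : (0:ℝ) < 1 / (2 * L))
  filter_upwards [h, eventually_ge_atTop (1:ℝ)] with x hx hx1
  have hx0 : 0 < x := by linarith
  have hlog : Real.log x ≤ x ^ β / (2 * L) := by
    have h1 : ‖Real.log x‖ ≤ 1 / (2 * L) * ‖x ^ β‖ := hx
    rw [Real.norm_eq_abs, Real.norm_eq_abs, abs_of_nonneg (Real.log_nonneg hx1),
      abs_of_nonneg (Real.rpow_nonneg hx0.le _)] at h1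
    calc Real.log x ≤ 1 / (2 * L) * x ^ β := h1
      _ = x ^ β / (2 * L) := by ring
  rw [Real.rpow_def_of_pos hx0 (-L), Real.exp_le_exp]
  have : L * Real.log x ≤ x ^ β / 2 := by
    calc L * Real.log x ≤ L * (x ^ β / (2 * L)) := by
          apply mul_le_mul_of_nonneg_left hlog hL.le
      _ = x ^ β / 2 := by field_simp
  linarith


set_option maxHeartbeats 1600000 in
/-- Lemma 4.6 (Lemma 2.10 of Inatsugu–Yoshida): for i.i.d. standard normal `W_1, …, W_n`,
if the constant `Č` is sufficiently large then
`P[| |W|_{(â_n)} - c(α)^{1/2} | ≥ Č n^{-γ₂}] = O(n^{-L})` for every `L > 0`. -/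
theorem stmt_12 {Ω : Type*} [MeasurableSpace Ω] (P : Measure Ω) [IsProbabilityMeasure P]
    (α γ₂ : ℝ) (hα : α ∈ Set.Ioo (0 : ℝ) 1) (hγ₂ : γ₂ ∈ Set.Ioo (0 : ℝ) (1 / 2))
    (W : ℕ → ℕ → Ω → ℝ) (hWmeas : ∀ n j, Measurable (W n j))
    (hWindep : ∀ n : ℕ, iIndepFun
      (fun j : Fin n => W n (j.1 + 1)) P)
    (hWlaw : ∀ n : ℕ, ∀ j ∈ Finset.Icc 1 n, Measure.map (W n j) P = gaussianReal 0 1)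
    (c : ℝ) (hc : 0 < c)
    (hcα : gaussianReal 0 1 {x : ℝ | x ^ 2 ≤ c} = ENNReal.ofReal (1 - α)) :
    ∃ Cc₀ : ℝ, 0 < Cc₀ ∧ ∀ Cc : ℝ, Cc₀ ≤ Cc → ∀ L : ℝ, 0 < L →
      ∃ C : ℝ, ∀ᶠ n : ℕ in atTop,
        (P {ω : Ω |
            Cc * (n : ℝ) ^ (-γ₂)
              ≤ abs (orderStatIn (Finset.Icc 1 n) (fun i => |W n i ω|)
                  (⌊(⌊(1 - α) * (n : ℝ) - (n : ℝ) ^ (1 - γ₂)⌋ : ℝ)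
                      - (n : ℝ) ^ (1 - γ₂)⌋).toNat
                  - Real.sqrt c)}).toReal
          ≤ C * (n : ℝ) ^ (-L) := by
  obtain ⟨hα0, hα1⟩ := hα
  obtain ⟨hγ0, hγh⟩ := hγ₂
  set t₀ : ℝ := Real.sqrt c with ht₀def
  have ht₀ : 0 < t₀ := Real.sqrt_pos.mpr hc
  set κ : ℝ := gaussianPDFReal 0 1 (2 * t₀) with hκdef
  have hκ : 0 < κ := gaussianPDFReal_pos 0 1 _ one_ne_zero
  have gsq : gcdf t₀ = 1 - α := gcdf_sqrt hc hα1.le hcα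
  refine ⟨4 / κ + 1, by positivity, ?_⟩
  intro Cc hCc L hL
  refine ⟨2, ?_⟩
  have hCc0 : 0 < Cc := lt_of_lt_of_le (by positivity) hCc
  have hκCc : 4 ≤ κ * Cc := by
    have : κ * (4 / κ + 1) ≤ κ * Cc := mul_le_mul_of_nonneg_left hCc hκ.le
    rw [mul_add, mul_div_cancel₀ _ hκ.ne', mul_one] at this
    linarith
  -- eventual real conditions
  have hβ : 0 < 1 - 2 * γ₂ := by linarith
  have h1γ : 0 < 1 - γ₂ := by linarith
  have F2r : ∀ᶠ x : ℝ in atTop, Cc * x ^ (-γ₂) ≤ t₀ := by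
    have : Tendsto (fun x : ℝ => Cc * x ^ (-γ₂)) atTop (nhds (Cc * 0)) :=
      (tendsto_rpow_neg_atTop hγ0).const_mul Cc
    rw [mul_zero] at this
    exact this.eventually_le_const ht₀
  have F3r : ∀ᶠ x : ℝ in atTop, 2 * x ^ (1 - γ₂) + 3 ≤ (1 - α) * x := by
    have h2γ : ∀ᶠ x : ℝ in atTop, 2 * x ^ (-γ₂) ≤ (1 - α) / 2 := by
      have : Tendsto (fun x : ℝ => 2 * x ^ (-γ₂)) atTop (nhds (2 * 0)) :=
        (tendsto_rpow_neg_atTop hγ0).const_mul 2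
      rw [mul_zero] at this
      exact this.eventually_le_const (by linarith)
    have h3 : ∀ᶠ x : ℝ in atTop, 3 ≤ (1 - α) / 2 * x := by
      have ht : Tendsto (fun x : ℝ => (1 - α) / 2 * x) atTop atTop :=
        Tendsto.const_mul_atTop (by linarith) tendsto_id
      exact ht.eventually_ge_atTop 3
    filter_upwards [h2γ, h3, eventually_ge_atTop (1:ℝ)] with x h2 h3 hx1
    have hx0 : 0 < x := by linarith
    have hxa : x ^ (1 - γ₂) = x * x ^ (-γ₂) := by
      rw [show (1 : ℝ) - γ₂ = 1 + -γ₂ by ring, Real.rpow_add hx0, Real.rpow_one]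
    rw [hxa]
    have : 2 * (x * x ^ (-γ₂)) = (2 * x ^ (-γ₂)) * x := by ring
    rw [this]
    have h4 : (2 * x ^ (-γ₂)) * x ≤ ((1 - α) / 2) * x :=
      mul_le_mul_of_nonneg_right h2 hx0.le
    linarith
  have F4r : ∀ᶠ x : ℝ in atTop, 2 ≤ x ^ (1 - γ₂) :=
    (tendsto_rpow_atTop h1γ).eventually_ge_atTop 2
  have F5r := exp_le_rpow_event hβ hL
  have Fnat : ∀ᶠ n : ℕ in atTop,
      Cc * (n:ℝ) ^ (-γ₂) ≤ t₀ ∧ (2 * (n:ℝ) ^ (1 - γ₂) + 3 ≤ (1 - α) * (n:ℝ))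
        ∧ (2 ≤ (n:ℝ) ^ (1 - γ₂))
        ∧ (Real.exp (-((n:ℝ) ^ (1 - 2*γ₂)) / 2) ≤ (n:ℝ) ^ (-L)) ∧ 1 ≤ n := by
    have := tendsto_natCast_atTop_atTop (R := ℝ)
    filter_upwards [this.eventually F2r, this.eventually F3r, this.eventually F4r,
      this.eventually F5r, eventually_ge_atTop 1] with n h2 h3 h4 h5 h1
    exact ⟨h2, h3, h4, h5, h1⟩
  filter_upwards [Fnat] with n ⟨F2, F3, F4, F5, F1⟩
  -- setup
  have hn : 0 < n := F1
  set x : ℝ := (n : ℝ) with hxdef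
  have hx0 : (0:ℝ) < x := by rw [hxdef]; exact_mod_cast hn
  set ε : ℝ := Cc * x ^ (-γ₂) with hεdef
  have hε : 0 < ε := by positivity
  set a : ℝ := x ^ (1 - γ₂) with hadef
  have ha : 0 < a := Real.rpow_pos_of_pos hx0 _
  have hxa : x * x ^ (-γ₂) = a := by
    rw [hadef, show (1 : ℝ) - γ₂ = 1 + -γ₂ by ring, Real.rpow_add hx0, Real.rpow_one]
  set rZ : ℤ := ⌊(⌊(1 - α) * x - a⌋ : ℝ) - a⌋ with hrZdef
  set r : ℕ := rZ.toNat with hrdef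
  set U : ℝ := (1 - α) * x - 2 * a with hUdef
  have hU3 : 3 ≤ U := by rw [hUdef]; linarith
  have hBl : U - 1 ≤ (⌊(1 - α) * x - a⌋ : ℝ) - a := by
    have := Int.sub_one_lt_floor ((1 - α) * x - a)
    rw [hUdef]; push_cast; linarith
  have hBu : (⌊(1 - α) * x - a⌋ : ℝ) - a ≤ U := by
    have := Int.floor_le ((1 - α) * x - a)
    rw [hUdef]; linarith
  have hrZ1 : 1 ≤ rZ := by
    rw [hrZdef]
    apply Int.le_floor.mpr
    push_cast
    linarith
  have hrcast : ((r : ℕ) : ℝ) = (rZ : ℝ) := by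
    rw [hrdef]
    exact_mod_cast congrArg (fun z : ℤ => (z : ℝ)) (Int.toNat_of_nonneg (by linarith))
  have hr_le : (r : ℝ) ≤ U := by
    rw [hrcast]
    calc (rZ : ℝ) ≤ (⌊(1 - α) * x - a⌋ : ℝ) - a := Int.floor_le _
      _ ≤ U := hBu
  have hr_ge : U - 2 ≤ (r : ℝ) := by
    rw [hrcast]
    have := Int.sub_one_lt_floor ((⌊(1 - α) * x - a⌋ : ℝ) - a)
    rw [hrZdef]
    linarith
  have hr1 : 1 ≤ r := by
    rw [hrdef]; omega
  have hrn : r ≤ n := by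
    have : (r : ℝ) ≤ (n : ℝ) := by
      calc (r:ℝ) ≤ U := hr_le
        _ ≤ (1 - α) * x := by rw [hUdef]; linarith
        _ ≤ x := by nlinarith [mul_nonneg hα0.le hx0.le]
    exact_mod_cast this
  -- gaussian cdf margins
  set u : ℝ := t₀ - ε with hudef
  set v : ℝ := t₀ + ε / 2 with hvdef
  have hu0 : 0 ≤ u := by rw [hudef]; linarith [F2]
  have m1 : gcdf u ≤ 1 - α - ε * κ := by
    have := gcdf_increment (u := u) (v := t₀) (M := 2 * t₀) hu0 (by rw [hudef]; linarith)
      (by linarith)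
    rw [gsq] at this
    rw [hudef] at this ⊢
    rw [hκdef]
    linarith
  have m2 : 1 - α + ε / 2 * κ ≤ gcdf v := by
    have := gcdf_increment (u := t₀) (v := v) (M := 2 * t₀) ht₀.le (by rw [hvdef]; linarith)
      (by rw [hvdef]; linarith [F2])
    rw [gsq] at this
    rw [hvdef] at this ⊢
    rw [hκdef]
    linarith
  have hxε : x * ε = Cc * a := by
    rw [hεdef, ← hxa]; ring
  -- margins for the tails
  have marg1 : x * gcdf u + a ≤ (r : ℝ) := by
    have h1 : x * gcdf u ≤ x * (1 - α - ε * κ) := mul_le_mul_of_nonneg_left m1 hx0.le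
    have h2 : x * (1 - α - ε * κ) = (1 - α) * x - κ * Cc * a := by
      rw [mul_sub, show x * (ε * κ) = κ * (x * ε) by ring, hxε]; ring
    have h3 : 2 ≤ (κ * Cc - 3) * a :=
      le_trans F4 (le_mul_of_one_le_left ha.le (by linarith))
    rw [hUdef] at hr_ge
    linarith
  have marg2 : ((r : ℝ) - 1) + a ≤ x * gcdf v := by
    have h1 : x * (1 - α + ε / 2 * κ) ≤ x * gcdf v := mul_le_mul_of_nonneg_left m2 hx0.le
    have h2 : x * (1 - α + ε / 2 * κ) = (1 - α) * x + κ * Cc * a / 2 := by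
      rw [mul_add, show x * (ε / 2 * κ) = κ * (x * ε) / 2 by ring, hxε]; ring
    have h4 : 0 ≤ κ * Cc * a / 2 := by positivity
    rw [hUdef] at hr_le
    linarith
  -- the three sets
  set T : Set Ω := {ω | ∃ i ∈ Finset.Icc 1 n, ∃ j ∈ Finset.Icc 1 n,
    i ≠ j ∧ |W n i ω| = |W n j ω|} with hTdef
  set A₁ : Set Ω := {ω | (r : ℝ)
      ≤ (((Finset.Icc 1 n).filter (fun k => |W n k ω| ≤ u)).card : ℝ)} with hA₁def
  set A₂ : Set Ω := {ω | (((Finset.Icc 1 n).filter (fun k => |W n k ω| ≤ v)).card : ℝ)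
      ≤ (r : ℝ) - 1} with hA₂def
  set E : Set Ω := {ω : Ω | ε
      ≤ |orderStatIn (Finset.Icc 1 n) (fun i => |W n i ω|) r - t₀|} with hEdef
  have hsub : E ⊆ T ∪ (A₁ ∪ A₂) := by
    intro ω hω
    by_cases hT : ω ∈ T
    · exact Or.inl hT
    right
    have hinj : ∀ k1 ∈ Finset.Icc 1 n, ∀ k2 ∈ Finset.Icc 1 n,
        |W n k1 ω| = |W n k2 ω| → k1 = k2 := by
      intro k1 hk1 k2 hk2 heq
      by_contra hne
      exact hT ⟨k1, hk1, k2, hk2, hne, heq⟩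
    have hrIcc : r ∈ Finset.Icc 1 (Finset.Icc 1 n).card := by
      rw [Nat.card_Icc]
      simp only [Finset.mem_Icc]
      omega
    set o : ℝ := orderStatIn (Finset.Icc 1 n) (fun i => |W n i ω|) r with hodef
    have hω' : ε ≤ |o - t₀| := hω
    rcases le_abs.mp hω' with h | h
    · -- o ≥ t₀ + ε : upper case, N_v small
      right
      have hno : ¬ (o ≤ v) := by rw [hvdef]; linarith
      have := (orderStatIn_le_iff hinj hrIcc v).not.mp hno
      push_neg at this
      have hlt : ((Finset.Icc 1 n).filter (fun k => |W n k ω| ≤ v)).card < r := this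
      show ((((Finset.Icc 1 n).filter (fun k => |W n k ω| ≤ v)).card : ℝ)) ≤ (r : ℝ) - 1
      have : (((Finset.Icc 1 n).filter (fun k => |W n k ω| ≤ v)).card : ℝ) + 1 ≤ (r : ℝ) := by
        exact_mod_cast Nat.succ_le_of_lt hlt
      linarith
    · -- o ≤ t₀ - ε : lower case, N_u big
      left
      have ho : o ≤ u := by rw [hudef]; linarith
      have := (orderStatIn_le_iff hinj hrIcc u).mp ho
      show (r : ℝ) ≤ _
      exact_mod_cast this
  -- measure bound
  have hT0 : P T = 0 := distinct_null (hWmeas n) (hWindep n) (hWlaw n)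
  have bound1 : (P A₁).toReal ≤ Real.exp (-(a ^ 2) / (2 * n)) :=
    tail_upper hn (hWmeas n) (hWindep n) (hWlaw n) ha marg1
  have bound2 : (P A₂).toReal ≤ Real.exp (-(a ^ 2) / (2 * n)) :=
    tail_lower hn (hWmeas n) (hWindep n) (hWlaw n) ha marg2
  have hPE : (P E).toReal ≤ (P A₁).toReal + (P A₂).toReal := by
    calc (P E).toReal ≤ (P (T ∪ (A₁ ∪ A₂))).toReal :=
          ENNReal.toReal_mono (measure_ne_top _ _) (measure_mono hsub)
      _ ≤ ((P T) + (P (A₁ ∪ A₂))).toReal :=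
          ENNReal.toReal_mono (by simp [measure_ne_top]) (measure_union_le _ _)
      _ = (P (A₁ ∪ A₂)).toReal := by rw [hT0, zero_add]
      _ ≤ ((P A₁) + (P A₂)).toReal :=
          ENNReal.toReal_mono (by simp [measure_ne_top]) (measure_union_le _ _)
      _ = (P A₁).toReal + (P A₂).toReal :=
          ENNReal.toReal_add (measure_ne_top _ _) (measure_ne_top _ _)
  have hexp : Real.exp (-(a ^ 2) / (2 * n)) = Real.exp (-(x ^ (1 - 2*γ₂)) / 2) := by
    congr 1
    have ha2 : a ^ 2 = x * x ^ (1 - 2*γ₂) := by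
      rw [hadef, ← Real.rpow_natCast (x ^ (1 - γ₂)) 2, ← Real.rpow_mul hx0.le]
      rw [show (1 - γ₂) * (2:ℕ) = 1 + (1 - 2*γ₂) by push_cast; ring]
      rw [Real.rpow_add hx0, Real.rpow_one]
    rw [ha2]
    field_simp
    ring
  show (P E).toReal ≤ 2 * x ^ (-L)
  calc (P E).toReal ≤ (P A₁).toReal + (P A₂).toReal := hPE
    _ ≤ 2 * Real.exp (-(a ^ 2) / (2 * n)) := by linarith
    _ = 2 * Real.exp (-(x ^ (1 - 2*γ₂)) / 2) := by rw [hexp]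
    _ ≤ 2 * (n:ℝ) ^ (-L) := by
        have := F5
        apply mul_le_mul_of_nonneg_left _ (by norm_num : (0:ℝ) ≤ 2)
        exact this
end
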